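/- arXiv:1603.05512 — 3 statements merged into one kernel-verified Lean document; each statement's English description precedes it below -/
import Mathlib

section
/- Let m, n ∈ ℕ, let a₁, …, a_m be real numbers with 0 < a_ℓ ≤ 1, and let s_{j,ℓ} ∈ ℂ with Re(s_{j,ℓ}) > 0 for all 1 ≤ j ≤ n, 1 ≤ ℓ ≤ m; assume w_{jk,ℓ} := s_{j,ℓ} + conj(s_{k,ℓ}) ≠ 1 for all j, k, ℓ. Then the n×n complex matrix whose (j,k) entry is ∏_{ℓ=1}^{m} ( (a_ℓ^{−w_{jk,ℓ}} + (1+a_ℓ)^{−w_{jk,ℓ}} − ζ(w_{jk,ℓ}, a_ℓ))/w_{jk,ℓ} + (1+a_ℓ)^{1−w_{jk,ℓ}} / (w_{jk,ℓ}(w_{jk,ℓ} − 1)) ) is positive semidefinite, where ζ(s, a) is the Hurwitz zeta function. -/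
open Complex ComplexOrder

section HZauxSection
open MeasureTheory Set Filter Topology
open scoped ComplexOrder
noncomputable section
namespace HZaux



/-- the integrand -/
def K (a : ℝ) (w : ℂ) (x : ℝ) : ℂ := ((Int.fract x : ℝ) : ℂ) * ((x : ℂ) + a) ^ (-w - 1)

/-- the closed form -/
def G (a : ℝ) (w : ℂ) : ℂ :=
  ((a : ℂ) ^ (-w) + (1 + (a : ℂ)) ^ (-w)
      - HurwitzZeta.hurwitzZeta (↑a : UnitAddCircle) w) / w
    + (1 + (a : ℂ)) ^ (1 - w) / (w * (w - 1))

lemma mem_slit {x a : ℝ} (hx : 0 < x + a) : ((x : ℂ) + a) ∈ slitPlane := by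
  left; simpa using hx

lemma hasDerivAt_cpow_shift (a : ℝ) (r : ℂ) {x : ℝ} (hx : 0 < x + a) :
    HasDerivAt (fun y : ℝ => ((y : ℂ) + a) ^ r) (r * ((x : ℂ) + a) ^ (r - 1)) x := by
  have h1 : HasDerivAt (fun z : ℂ => (z + (a : ℂ)) ^ r)
      (r * (((x : ℝ) : ℂ) + a) ^ (r - 1)) ((x : ℝ) : ℂ) := by
    have := ((hasDerivAt_id ((x : ℝ) : ℂ)).add_const (a : ℂ)).cpow_const (c := r)
      (by simpa using mem_slit hx)
    simpa using this
  exact h1.comp_ofReal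

lemma continuousOn_cpow_shift (a : ℝ) (w : ℂ) {s : Set ℝ} (hs : ∀ x ∈ s, 0 < x + a) :
    ContinuousOn (fun x : ℝ => ((x : ℂ) + a) ^ w) s :=
  ContinuousOn.cpow_const
    ((Complex.continuous_ofReal.add continuous_const).continuousOn)
    (fun x hx => mem_slit (hs x hx))

lemma norm_K_le {a : ℝ} (ha : 0 < a) {w : ℂ} (hw : 0 ≤ w.re) {x : ℝ} (hx : 1 ≤ x) :
    ‖K a w x‖ ≤ x ^ (-w.re - 1) := by
  have hxa : (0:ℝ) < x + a := by linarith
  have hb : ((x : ℂ) + a) = (((x + a : ℝ)) : ℂ) := by push_cast; ring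
  have h1 : ‖((x : ℂ) + a) ^ (-w - 1)‖ = (x + a) ^ (-w.re - 1) := by
    rw [hb, Complex.norm_cpow_eq_rpow_re_of_pos hxa]
    norm_num
  rw [K, norm_mul, h1]
  have h2 : ‖((Int.fract x : ℝ) : ℂ)‖ ≤ 1 := by
    rw [Complex.norm_real, Real.norm_eq_abs, _root_.abs_of_nonneg (Int.fract_nonneg x)]
    exact (Int.fract_lt_one x).le
  have h3 : (x + a) ^ (-w.re - 1) ≤ x ^ (-w.re - 1) :=
    Real.rpow_le_rpow_of_nonpos (by linarith) (by linarith) (by linarith)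
  calc ‖((Int.fract x : ℝ) : ℂ)‖ * (x + a) ^ (-w.re - 1)
      ≤ 1 * (x ^ (-w.re - 1)) :=
        mul_le_mul h2 h3 (Real.rpow_nonneg hxa.le _) zero_le_one
    _ = x ^ (-w.re - 1) := one_mul _

lemma aesm_K {a : ℝ} (ha : 0 < a) (w : ℂ) :
    AEStronglyMeasurable (K a w) (volume.restrict (Ioi 1)) := by
  apply AEStronglyMeasurable.mul
  · exact (Complex.measurable_ofReal.comp measurable_fract).aestronglyMeasurable
  · exact (continuousOn_cpow_shift a (-w - 1)
      (fun x hx => by have := mem_Ioi.mp hx; linarith)).aestronglyMeasurable measurableSet_Ioi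

lemma integrableOn_K {a : ℝ} (ha : 0 < a) {w : ℂ} (hw : 0 < w.re) :
    IntegrableOn (K a w) (Ioi 1) := by
  apply Integrable.mono' (g := fun x : ℝ => x ^ (-w.re - 1))
    (integrableOn_Ioi_rpow_of_lt (by linarith) one_pos) (aesm_K ha w)
  rw [ae_restrict_iff' measurableSet_Ioi]
  exact Filter.Eventually.of_forall fun x hx => norm_K_le ha hw.le (le_of_lt (mem_Ioi.mp hx))



/-- the antiderivative -/
def g (a c : ℝ) (w : ℂ) (x : ℝ) : ℂ :=
  -(((x : ℂ) - c) * ((x : ℂ) + a) ^ (-w)) / w + ((x : ℂ) + a) ^ (1 - w) / (w * (1 - w))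

lemma hasDerivAt_g {a c : ℝ} {w : ℂ} {x : ℝ} (ha : 0 < x + a) (hw0 : w ≠ 0) (hw1 : w ≠ 1) :
    HasDerivAt (g a c w) (((x : ℂ) - c) * ((x : ℂ) + a) ^ (-w - 1)) x := by
  have hw1' : (1 : ℂ) - w ≠ 0 := by
    intro h; apply hw1; linear_combination -h
  have hX : ((x : ℂ) + a) ≠ 0 := by
    intro h
    have := congrArg Complex.re h
    simp at this; linarith
  have hA : HasDerivAt (fun y : ℝ => ((y : ℂ) - c)) 1 x := by
    simpa using (Complex.ofRealCLM.hasDerivAt (x := x)).sub_const (c : ℂ)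
  have hB := hasDerivAt_cpow_shift a (-w) ha
  have hC : HasDerivAt (fun y : ℝ => ((y : ℂ) + a) ^ (1 - w))
      ((1 - w) * ((x : ℂ) + a) ^ (-w)) x := by
    have := hasDerivAt_cpow_shift a (1 - w) ha
    rwa [show (1 : ℂ) - w - 1 = -w by ring] at this
  have htot := ((hA.mul hB).neg.div_const w).add (hC.div_const (w * (1 - w)))
  refine htot.congr_deriv ?_
  have hsplit : ((x : ℂ) + a) ^ (-w) = ((x : ℂ) + a) ^ (-w - 1) * ((x : ℂ) + a) := by
    have h := Complex.cpow_add (x := (x : ℂ) + a) (-w - 1) 1 hX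
    rw [show -w - 1 + 1 = -w by ring, Complex.cpow_one] at h
    exact h
  rw [hsplit]
  have hww : w - 1 ≠ 0 := sub_ne_zero_of_ne hw1
  field_simp
  ring

lemma fract_eq_on_Ico {n : ℕ} {x : ℝ} (h1 : (n : ℝ) + 1 ≤ x) (h2 : x < (n : ℝ) + 2) :
    Int.fract x = x - ((n : ℝ) + 1) := by
  have : ⌊x⌋ = (n : ℤ) + 1 := by
    rw [Int.floor_eq_iff]
    constructor <;> push_cast <;> linarith
  rw [Int.fract, this]
  push_cast; ring

lemma integral_Ioc_K {a : ℝ} (ha : 0 < a) {w : ℂ} (hw0 : w ≠ 0) (hw1 : w ≠ 1) (n : ℕ) :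
    ∫ x in Ioc ((n : ℝ) + 1) ((n : ℝ) + 2), K a w x
      = -(((n : ℂ) + 2 + a) ^ (-w)) / w
        + (((n : ℂ) + 2 + a) ^ (1 - w) - ((n : ℂ) + 1 + a) ^ (1 - w)) / (w * (1 - w)) := by
  have hle : (n : ℝ) + 1 ≤ (n : ℝ) + 2 := by linarith
  have hpos : ∀ x ∈ Icc ((n : ℝ) + 1) ((n : ℝ) + 2), 0 < x + a := by
    intro x hx
    have := hx.1
    have hn : (0:ℝ) ≤ n := Nat.cast_nonneg n
    linarith
  rw [← intervalIntegral.integral_of_le hle]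
  have hae : ∀ᵐ x : ℝ, x ≠ (n : ℝ) + 2 := by
    have hset : {x : ℝ | ¬ x ≠ (n : ℝ) + 2} = {(n : ℝ) + 2} := by ext y; simp
    rw [ae_iff, hset]
    exact measure_singleton _
  have hcong : ∀ᵐ x : ℝ, x ∈ Set.uIoc ((n : ℝ) + 1) ((n : ℝ) + 2) →
      K a w x = ((x : ℂ) - ((n : ℝ) + 1 : ℝ)) * ((x : ℂ) + a) ^ (-w - 1) := by
    filter_upwards [hae] with x hx hmem
    rw [Set.uIoc_of_le hle] at hmem
    have h2 : x < (n : ℝ) + 2 := lt_of_le_of_ne hmem.2 hx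
    rw [K, fract_eq_on_Ico hmem.1.le h2]
    push_cast
    ring
  rw [intervalIntegral.integral_congr_ae hcong]
  have hderiv : ∀ x ∈ uIcc ((n : ℝ) + 1) ((n : ℝ) + 2),
      HasDerivAt (g a ((n : ℝ) + 1) w) (((x : ℂ) - ((n : ℝ) + 1 : ℝ)) * ((x : ℂ) + a) ^ (-w - 1)) x := by
    intro x hx
    rw [uIcc_of_le hle] at hx
    exact hasDerivAt_g (hpos x hx) hw0 hw1
  have hint : IntervalIntegrable
      (fun x : ℝ => ((x : ℂ) - ((n : ℝ) + 1 : ℝ)) * ((x : ℂ) + a) ^ (-w - 1))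
      volume ((n : ℝ) + 1) ((n : ℝ) + 2) := by
    apply ContinuousOn.intervalIntegrable
    apply ContinuousOn.mul
    · exact ((Complex.continuous_ofReal.sub continuous_const).continuousOn)
    · rw [uIcc_of_le hle]
      exact continuousOn_cpow_shift a (-w - 1) hpos
  rw [intervalIntegral.integral_eq_sub_of_hasDerivAt hderiv hint]
  have hw1' : (1 : ℂ) - w ≠ 0 := by intro h; apply hw1; linear_combination -h
  rw [g, g]
  push_cast
  ring_nf

lemma iUnion_Ioc : (⋃ n : ℕ, Ioc ((n : ℝ) + 1) ((n : ℝ) + 2)) = Ioi 1 := by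
  ext x
  simp only [mem_iUnion, mem_Ioc, mem_Ioi]
  constructor
  · rintro ⟨n, h1, _⟩
    have : (0:ℝ) ≤ n := Nat.cast_nonneg n
    linarith
  · intro hx
    have hx0 : 0 ≤ x := by linarith
    have h2 : 1 < ⌈x⌉₊ := by
      rw [Nat.lt_ceil]; exact_mod_cast hx
    refine ⟨⌈x⌉₊ - 2, ?_, ?_⟩
    · have hlt : (⌈x⌉₊ : ℝ) < x + 1 := Nat.ceil_lt_add_one hx0
      have hcast : ((⌈x⌉₊ - 2 : ℕ) : ℝ) = (⌈x⌉₊ : ℝ) - 2 := by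
        have : 2 ≤ ⌈x⌉₊ := h2
        push_cast [this]
        ring
      rw [hcast]; linarith
    · have hle : x ≤ (⌈x⌉₊ : ℝ) := Nat.le_ceil x
      have hcast : ((⌈x⌉₊ - 2 : ℕ) : ℝ) = (⌈x⌉₊ : ℝ) - 2 := by
        have : 2 ≤ ⌈x⌉₊ := h2
        push_cast [this]
        ring
      rw [hcast]; linarith

lemma F_eq_G_of_one_lt {a : ℝ} (ha0 : 0 < a) (ha1 : a ≤ 1) {w : ℂ} (hw : 1 < w.re) :
    ∫ x in Ioi 1, K a w x = G a w := by
  have hw0 : w ≠ 0 := by intro h; rw [h] at hw; simp at hw; linarith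
  have hw1 : w ≠ 1 := by intro h; rw [h] at hw; simp at hw
  have hw1' : (1 : ℂ) - w ≠ 0 := by intro h; apply hw1; linear_combination -h
  have hwre : 0 < w.re := by linarith
  -- decomposition into intervals
  have hsum0 : HasSum (fun n : ℕ => ∫ x in Ioc ((n : ℝ) + 1) ((n : ℝ) + 2), K a w x)
      (∫ x in Ioi 1, K a w x) := by
    have := hasSum_integral_iUnion (μ := volume) (f := K a w)
      (s := fun n : ℕ => Ioc ((n : ℝ) + 1) ((n : ℝ) + 2))
      (fun n => measurableSet_Ioc)
      (fun i j hij => by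
        rw [Function.onFun, Set.Ioc_disjoint_Ioc]
        rcases hij.lt_or_gt with h | h
        · have : (i : ℝ) + 1 < j + 1 := by exact_mod_cast by omega
          refine le_trans (min_le_left _ _) (le_trans ?_ (le_max_right _ _))
          exact_mod_cast by omega
        · have : (j : ℝ) + 1 < i + 1 := by exact_mod_cast by omega
          refine le_trans (min_le_right _ _) (le_trans ?_ (le_max_left _ _))
          exact_mod_cast by omega)
      (by rw [iUnion_Ioc]; exact integrableOn_K ha0 hwre)
    rwa [iUnion_Ioc] at this
  -- rewrite the interval integrals in closed form
  have hsum1 : HasSum (fun n : ℕ =>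
      -(((n : ℂ) + 2 + a) ^ (-w)) / w
        + (((n : ℂ) + 2 + a) ^ (1 - w) - ((n : ℂ) + 1 + a) ^ (1 - w)) / (w * (1 - w)))
      (∫ x in Ioi 1, K a w x) := by
    exact hsum0.congr_fun (fun n => (integral_Ioc_K ha0 hw0 hw1 n).symm)
  -- the zeta part
  have hz := HurwitzZeta.hasSum_hurwitzZeta_of_one_lt_re (a := a) ⟨ha0.le, ha1⟩ hw
  have hc2 : (1 : ℂ) / ((0 : ℂ) + a) ^ w + 1 / ((1 : ℂ) + a) ^ w
      = (1 : ℂ) / ((0 : ℂ) + a) ^ w + 1 / ((1 : ℂ) + a) ^ w := rfl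
  have h2' : HasSum (fun n : ℕ => 1 / (((n + 2 : ℕ) : ℂ) + a) ^ w)
      (HurwitzZeta.hurwitzZeta (↑a : UnitAddCircle) w
        - (1 / ((0 : ℂ) + a) ^ w + 1 / ((1 : ℂ) + a) ^ w)) := by
    apply (hasSum_nat_add_iff (f := fun n : ℕ => 1 / ((n : ℂ) + a) ^ w) 2).mpr
    convert hz using 1
    · rfl
    rw [Finset.sum_range_succ, Finset.sum_range_one]
    push_cast
    ring
  have hz' : HasSum (fun n : ℕ => -((((n : ℂ)) + 2 + a) ^ (-w)) / w)
      (-(HurwitzZeta.hurwitzZeta (↑a : UnitAddCircle) w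
          - (a : ℂ) ^ (-w) - (1 + (a : ℂ)) ^ (-w)) / w) := by
    have h3 := (h2'.div_const w).neg
    have h4 := h3.congr_fun (g := fun n : ℕ => -((((n : ℂ)) + 2 + a) ^ (-w)) / w)
      (fun n => by
        show -((((n : ℂ)) + 2 + a) ^ (-w)) / w = -(1 / (((n + 2 : ℕ) : ℂ) + a) ^ w / w)
        rw [Complex.cpow_neg]; push_cast; ring)
    convert h4 using 1
    · rfl
    rw [Complex.cpow_neg, Complex.cpow_neg]
    ring
  -- the telescoping part
  set f1 : ℕ → ℂ := fun n => (((n : ℂ)) + 1 + a) ^ (1 - w) with hf1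
  have hB : HasSum (fun n : ℕ => (f1 (n + 1) - f1 n) / (w * (1 - w)))
      ((∫ x in Ioi 1, K a w x)
        - (-(HurwitzZeta.hurwitzZeta (↑a : UnitAddCircle) w
            - (a : ℂ) ^ (-w) - (1 + (a : ℂ)) ^ (-w)) / w)) := by
    have := hsum1.sub hz'
    refine this.congr_fun fun n => ?_
    simp only [hf1]
    push_cast
    ring
  -- partial sums of telescoping series
  have htel : ∀ N : ℕ, ∑ n ∈ Finset.range N, (f1 (n + 1) - f1 n) / (w * (1 - w))
      = (f1 N - f1 0) / (w * (1 - w)) := by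
    intro N
    rw [← Finset.sum_div, Finset.sum_range_sub]
  have hf1lim : Tendsto f1 atTop (𝓝 0) := by
    rw [tendsto_zero_iff_norm_tendsto_zero]
    have hnorm : ∀ n : ℕ, ‖f1 n‖ = ((n : ℝ) + 1 + a) ^ (1 - w.re) := by
      intro n
      have hpos : (0:ℝ) < (n : ℝ) + 1 + a := by positivity
      have hcast : (((n : ℂ)) + 1 + a) = ((((n : ℝ) + 1 + a) : ℝ) : ℂ) := by push_cast; ring
      simp only [hf1]
      rw [hcast, Complex.norm_cpow_eq_rpow_re_of_pos hpos]
      norm_num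
    simp only [hnorm]
    have h1 : Tendsto (fun n : ℕ => ((n : ℝ) + 1 + a)) atTop atTop :=
      tendsto_atTop_add_const_right _ (1 + a)
        tendsto_natCast_atTop_atTop |>.congr (fun n => by ring)
    have h2 : Tendsto (fun y : ℝ => y ^ (1 - w.re)) atTop (𝓝 0) := by
      have := tendsto_rpow_neg_atTop (y := w.re - 1) (by linarith)
      refine this.congr fun y => by rw [show -(w.re - 1) = 1 - w.re by ring]
    exact h2.comp h1
  have hBsum : Tendsto (fun N => ∑ n ∈ Finset.range N, (f1 (n + 1) - f1 n) / (w * (1 - w)))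
      atTop (𝓝 ((0 - f1 0) / (w * (1 - w)))) := by
    simp only [htel]
    exact ((hf1lim.sub_const (f1 0)).div_const (w * (1 - w)))
  have hkey := tendsto_nhds_unique hB.tendsto_sum_nat hBsum
  have hF : (∫ x in Ioi 1, K a w x)
      = -(HurwitzZeta.hurwitzZeta (↑a : UnitAddCircle) w
          - (a : ℂ) ^ (-w) - (1 + (a : ℂ)) ^ (-w)) / w
        + (0 - f1 0) / (w * (1 - w)) := by
    linear_combination hkey
  rw [hF, G, hf1]
  simp only [Nat.cast_zero]
  rw [show ((0 : ℂ)) + 1 + a = 1 + (a : ℂ) by ring]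
  have hww : w - 1 ≠ 0 := sub_ne_zero_of_ne hw1
  field_simp
  ring

/-- indicator version for mellin -/
def fa (a : ℝ) : ℝ → ℂ :=
  Set.indicator (Ioi (1 + a)) (fun t : ℝ => ((Int.fract (t - a) : ℝ) : ℂ))

lemma mellin_eq_F {a : ℝ} (ha : 0 < a) (w : ℂ) :
    mellin (fa a) (-w) = ∫ x in Ioi 1, K a w x := by
  rw [mellin]
  have e1 : ∫ t in Ioi (0:ℝ), (t : ℂ) ^ (-w - 1) • fa a t
      = ∫ t in Ioi (0:ℝ), (Ioi (1 + a)).indicator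
          (fun t : ℝ => (t : ℂ) ^ (-w - 1) * ((Int.fract (t - a) : ℝ) : ℂ)) t := by
    apply setIntegral_congr_fun measurableSet_Ioi
    intro t _
    by_cases hmem : t ∈ Ioi (1 + a) <;>
      simp [fa, Set.indicator_of_mem, Set.indicator_of_notMem, hmem, smul_eq_mul]
  rw [e1, setIntegral_indicator measurableSet_Ioi]
  have e2 : Ioi (0:ℝ) ∩ Ioi (1 + a) = Ioi (1 + a) := by
    ext t
    simp only [mem_inter_iff, mem_Ioi]
    constructor
    · rintro ⟨_, h2⟩; exact h2
    · intro h; exact ⟨by linarith, h⟩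
  rw [e2, ← integral_indicator measurableSet_Ioi]
  rw [← integral_add_right_eq_self (fun t : ℝ => (Ioi (1 + a)).indicator
      (fun t : ℝ => (t : ℂ) ^ (-w - 1) * ((Int.fract (t - a) : ℝ) : ℂ)) t) a]
  rw [← integral_indicator (measurableSet_Ioi (a := (1:ℝ)))]
  congr 1
  funext x
  by_cases hx : x ∈ Ioi (1:ℝ)
  · have hx' : x + a ∈ Ioi (1 + a) := by
      simp only [mem_Ioi] at hx ⊢; linarith
    rw [Set.indicator_of_mem hx', Set.indicator_of_mem hx]
    rw [K, add_sub_cancel_right]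
    push_cast
    ring
  · have hx' : x + a ∉ Ioi (1 + a) := by
      simp only [mem_Ioi] at hx ⊢; intro h; apply hx; linarith
    rw [Set.indicator_of_notMem hx', Set.indicator_of_notMem hx]

lemma norm_fa_le (a : ℝ) (t : ℝ) : ‖fa a t‖ ≤ 1 := by
  rw [fa]
  by_cases hmem : t ∈ Ioi (1 + a)
  · rw [Set.indicator_of_mem hmem]
    rw [Complex.norm_real, Real.norm_eq_abs, _root_.abs_of_nonneg (Int.fract_nonneg _)]
    exact (Int.fract_lt_one _).le
  · rw [Set.indicator_of_notMem hmem]; simp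

lemma measurable_fa (a : ℝ) : Measurable (fa a) :=
  Measurable.indicator
    (Complex.measurable_ofReal.comp ((measurable_id.sub_const a).fract))
    measurableSet_Ioi

lemma differentiableAt_F {a : ℝ} (ha : 0 < a) {z : ℂ} (hz : 0 < z.re) :
    DifferentiableAt ℂ (fun w : ℂ => ∫ x in Ioi 1, K a w x) z := by
  have hfc : LocallyIntegrableOn (fa a) (Ioi 0) :=
    ((memLp_top_of_bound (measurable_fa a).aestronglyMeasurable 1
      (ae_of_all _ (norm_fa_le a))).locallyIntegrable le_top).locallyIntegrableOn _
  have hf_top : (fa a) =O[atTop] (· ^ (-(0:ℝ)) : ℝ → ℝ) := by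
    apply Asymptotics.IsBigO.of_bound 1
    filter_upwards [Filter.eventually_ge_atTop (1:ℝ)] with t ht
    rw [neg_zero, Real.rpow_zero]
    simpa using norm_fa_le a t
  have hf_bot : (fa a) =O[𝓝[>] (0:ℝ)] (· ^ (-(-z.re - 1)) : ℝ → ℝ) := by
    apply Asymptotics.IsBigO.of_bound 1
    have hmem : Iio (1 + a) ∈ 𝓝[>] (0:ℝ) :=
      nhdsWithin_le_nhds (Iio_mem_nhds (by linarith))
    filter_upwards [hmem] with t ht
    have : fa a t = 0 := Set.indicator_of_notMem (fun h => absurd (mem_Ioi.mp h) (not_lt.mpr (mem_Iio.mp ht).le)) _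
    rw [this]
    simp [abs_nonneg]
  have hd : DifferentiableAt ℂ (mellin (fa a)) (-z) :=
    mellin_differentiableAt_of_isBigO_rpow hfc hf_top (by simpa using hz)
      hf_bot (by simp only [Complex.neg_re]; linarith)
  have hcomp := DifferentiableAt.comp (𝕜 := ℂ) (g := mellin (fa a))
    (f := fun w : ℂ => -w) z hd (differentiable_neg.differentiableAt)
  refine hcomp.congr_of_eventuallyEq ?_
  filter_upwards with w
  exact (mellin_eq_F ha w).symm

lemma one_add_ne {a : ℝ} (ha : 0 < a) : (1 + (a : ℂ)) ≠ 0 := by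
  intro h
  have := congrArg Complex.re h
  simp at this
  linarith

lemma differentiableAt_G {a : ℝ} (ha : 0 < a) {z : ℂ} (hz0 : z ≠ 0) (hz1 : z ≠ 1) :
    DifferentiableAt ℂ (G a) z := by
  have ha' : (a : ℂ) ≠ 0 := Complex.ofReal_ne_zero.mpr ha.ne'
  have hb := one_add_ne ha
  have h1 : DifferentiableAt ℂ (fun w : ℂ => (a : ℂ) ^ (-w)) z :=
    (differentiable_neg.differentiableAt).const_cpow (Or.inl ha')
  have h2 : DifferentiableAt ℂ (fun w : ℂ => (1 + (a : ℂ)) ^ (-w)) z :=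
    (differentiable_neg.differentiableAt).const_cpow (Or.inl hb)
  have h3 : DifferentiableAt ℂ (fun w : ℂ => (1 + (a : ℂ)) ^ (1 - w)) z := by
    have : DifferentiableAt ℂ (fun w : ℂ => 1 - w) z :=
      (differentiableAt_const 1).sub differentiableAt_id
    exact this.const_cpow (Or.inl hb)
  have hζ : DifferentiableAt ℂ (HurwitzZeta.hurwitzZeta (↑a : UnitAddCircle)) z :=
    HurwitzZeta.differentiableAt_hurwitzZeta _ hz1
  apply DifferentiableAt.add
  · exact ((h1.add h2).sub hζ).div differentiableAt_id hz0
  · exact h3.div (differentiableAt_id.mul (differentiableAt_id.sub_const 1))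
      (mul_ne_zero hz0 (sub_ne_zero_of_ne hz1))

lemma isPreconnected_U : IsPreconnected {z : ℂ | 0 < z.re ∧ z ≠ 1} := by
  set C1 : Set ℂ := {z : ℂ | 0 < z.re} ∩ {z : ℂ | 0 < z.im} with hC1
  set C2 : Set ℂ := {z : ℂ | 0 < z.re} ∩ {z : ℂ | z.im < 0} with hC2
  set C3 : Set ℂ := {z : ℂ | 0 < z.re} ∩ {z : ℂ | z.re < 1} with hC3
  set C4 : Set ℂ := {z : ℂ | 1 < z.re} with hC4
  have p1 : IsPreconnected C1 :=
    (convex_halfSpace_re_gt 0 |>.inter (convex_halfSpace_im_gt 0)).isPreconnected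
  have p2 : IsPreconnected C2 :=
    (convex_halfSpace_re_gt 0 |>.inter (convex_halfSpace_im_lt 0)).isPreconnected
  have p3 : IsPreconnected C3 :=
    (convex_halfSpace_re_gt 0 |>.inter (convex_halfSpace_re_lt 1)).isPreconnected
  have p4 : IsPreconnected C4 := (convex_halfSpace_re_gt 1).isPreconnected
  have p13 : IsPreconnected (C1 ∪ C3) := by
    apply IsPreconnected.union (⟨1/2, 1/2⟩ : ℂ)
    · constructor <;> norm_num
    · constructor <;> norm_num
    · exact p1
    · exact p3
  have p24 : IsPreconnected (C2 ∪ C4) := by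
    apply IsPreconnected.union (⟨2, -1⟩ : ℂ)
    · constructor <;> norm_num
    · show (1:ℝ) < (⟨2, -1⟩ : ℂ).re
      norm_num
    · exact p2
    · exact p4
  have pall : IsPreconnected ((C1 ∪ C3) ∪ (C2 ∪ C4)) := by
    apply IsPreconnected.union (⟨1/2, -1/2⟩ : ℂ)
    · right
      constructor <;> norm_num
    · left
      constructor <;> norm_num
    · exact p13
    · exact p24
  have hU : {z : ℂ | 0 < z.re ∧ z ≠ 1} = (C1 ∪ C3) ∪ (C2 ∪ C4) := by
    ext z
    simp only [hC1, hC2, hC3, hC4, mem_setOf_eq, mem_union, mem_inter_iff]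
    constructor
    · rintro ⟨hre, hne⟩
      rcases lt_trichotomy z.im 0 with him | him | him
      · exact Or.inr (Or.inl ⟨hre, him⟩)
      · have hre1 : z.re ≠ 1 := by
          intro h
          exact hne (Complex.ext h (by simp [him]))
        rcases lt_or_gt_of_ne hre1 with h | h
        · exact Or.inl (Or.inr ⟨hre, h⟩)
        · exact Or.inr (Or.inr h)
      · exact Or.inl (Or.inl ⟨hre, him⟩)
    · rintro ((⟨h1, h2⟩ | ⟨h1, h2⟩) | (⟨h1, h2⟩ | h1))
      · exact ⟨h1, fun h => by rw [h] at h2; simp at h2⟩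
      · exact ⟨h1, fun h => by rw [h] at h2; simp at h2⟩
      · exact ⟨h1, fun h => by rw [h] at h2; simp at h2⟩
      · refine ⟨lt_trans zero_lt_one h1, fun h => by rw [h] at h1; simp at h1⟩
  rw [hU]
  exact pall

lemma F_eq_G {a : ℝ} (ha0 : 0 < a) (ha1 : a ≤ 1) {w : ℂ} (hw : 0 < w.re) (hw1 : w ≠ 1) :
    ∫ x in Ioi 1, K a w x = G a w := by
  have hUopen : IsOpen {z : ℂ | 0 < z.re ∧ z ≠ 1} := by
    have : {z : ℂ | 0 < z.re ∧ z ≠ 1} = (Complex.re ⁻¹' Ioi 0) ∩ {(1 : ℂ)}ᶜ := by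
      ext z; simp [mem_setOf_eq, and_comm]
    rw [this]
    exact (isOpen_Ioi.preimage Complex.continuous_re).inter isOpen_compl_singleton
  have hFd : DifferentiableOn ℂ (fun z => ∫ x in Ioi 1, K a z x) {z : ℂ | 0 < z.re ∧ z ≠ 1} :=
    fun z hz => (differentiableAt_F ha0 hz.1).differentiableWithinAt
  have hGd : DifferentiableOn ℂ (G a) {z : ℂ | 0 < z.re ∧ z ≠ 1} := by
    intro z hz
    have hz0 : z ≠ 0 := by
      intro h
      have := hz.1
      rw [h] at this
      simp at this
    exact (differentiableAt_G ha0 hz0 hz.2).differentiableWithinAt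
  have hFa := hFd.analyticOnNhd hUopen
  have hGa := hGd.analyticOnNhd hUopen
  have h2U : (2 : ℂ) ∈ {z : ℂ | 0 < z.re ∧ z ≠ 1} := by
    constructor
    · norm_num
    · norm_num
  have hev : (fun z => ∫ x in Ioi 1, K a z x) =ᶠ[𝓝 (2 : ℂ)] (G a) := by
    have hopen : IsOpen {z : ℂ | 1 < z.re} := isOpen_lt continuous_const Complex.continuous_re
    have h2m : (2 : ℂ) ∈ {z : ℂ | 1 < z.re} := by norm_num
    filter_upwards [hopen.mem_nhds h2m] with z hz
    exact F_eq_G_of_one_lt ha0 ha1 hz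
  exact hFa.eqOn_of_preconnected_of_eventuallyEq hGa isPreconnected_U h2U hev ⟨hw, hw1⟩

lemma K_factor {a : ℝ} (ha : 0 < a) (s t : ℂ) {x : ℝ} (hx : 1 < x) :
    K a (s + (starRingEnd ℂ) t) x
      = (((Int.fract x * (x + a)⁻¹ : ℝ)) : ℂ)
          * (((x : ℂ) + a) ^ (-s) * (starRingEnd ℂ) (((x : ℂ) + a) ^ (-t))) := by
  have hxa : (0:ℝ) < x + a := by linarith
  have hX : ((x : ℂ) + a) ≠ 0 := by
    intro h
    have := congrArg Complex.re h
    simp at this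
    linarith
  have hcast : ((x : ℂ) + a) = (((x + a : ℝ)) : ℂ) := by push_cast; ring
  have harg : ((x : ℂ) + a).arg ≠ Real.pi := by
    rw [hcast, Complex.arg_ofReal_of_nonneg hxa.le]
    exact (ne_of_lt Real.pi_pos)
  have hconj : ((x : ℂ) + a) ^ (-(starRingEnd ℂ) t)
      = (starRingEnd ℂ) (((x : ℂ) + a) ^ (-t)) := by
    have h1 := Complex.cpow_conj ((x : ℂ) + a) (-t) harg
    have h2 : (starRingEnd ℂ) ((x : ℂ) + a) = ((x : ℂ) + a) := by
      rw [hcast, Complex.conj_ofReal]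
    rw [h2] at h1
    rw [← h1, map_neg]
  have hsplit : ((x : ℂ) + a) ^ (-(s + (starRingEnd ℂ) t) - 1)
      = ((x : ℂ) + a) ^ (-(1 : ℂ)) * (((x : ℂ) + a) ^ (-s)
          * ((x : ℂ) + a) ^ (-(starRingEnd ℂ) t)) := by
    rw [← Complex.cpow_add _ _ hX, ← Complex.cpow_add _ _ hX]
    congr 1
    ring
  rw [K, hsplit, hconj]
  have hinv : ((x : ℂ) + a) ^ (-(1 : ℂ)) = (((x + a)⁻¹ : ℝ) : ℂ) := by
    rw [Complex.cpow_neg, Complex.cpow_one, hcast, Complex.ofReal_inv]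
  rw [hinv]
  push_cast
  ring

lemma key {n : ℕ} {ι : Type*} [DecidableEq ι] (a : ι → ℝ)
    (ha0 : ∀ l, 0 < a l) (ha1 : ∀ l, a l ≤ 1)
    (s : Fin n → ι → ℂ) (hs : ∀ j l, 0 < (s j l).re)
    (hne : ∀ j k l, s j l + (starRingEnd ℂ) (s k l) ≠ 1) (S : Finset ι) :
    ∀ c : Fin n → ℂ,
      0 ≤ ∑ j : Fin n, ∑ k : Fin n,
        (∏ l ∈ S, G (a l) (s j l + (starRingEnd ℂ) (s k l))) * c j * (starRingEnd ℂ) (c k) := by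
  induction S using Finset.induction_on with
  | empty =>
    intro c
    simp only [Finset.prod_empty, one_mul]
    have heq : ∑ j : Fin n, ∑ k : Fin n, c j * (starRingEnd ℂ) (c k)
        = (∑ j : Fin n, c j) * (starRingEnd ℂ) (∑ k : Fin n, c k) := by
      rw [map_sum, Finset.sum_mul_sum]
    rw [heq, Complex.mul_conj]
    exact_mod_cast Complex.normSq_nonneg _
  | @insert i S hiS IH =>
    intro c
    have hwre : ∀ j k : Fin n, 0 < (s j i + (starRingEnd ℂ) (s k i)).re := by
      intro j k
      rw [Complex.add_re, Complex.conj_re]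
      exact add_pos (hs j i) (hs k i)
    set P : Fin n → Fin n → ℂ :=
      fun j k => ∏ l ∈ S, G (a l) (s j l + (starRingEnd ℂ) (s k l)) with hP
    set Kt : Fin n → Fin n → ℝ → ℂ :=
      fun j k x => K (a i) (s j i + (starRingEnd ℂ) (s k i)) x
        * (P j k * c j * (starRingEnd ℂ) (c k)) with hKt
    have hint : ∀ j k : Fin n, IntegrableOn (Kt j k) (Ioi 1) :=
      fun j k => (integrableOn_K (ha0 i) (hwre j k)).mul_const _
    have step1 : ∑ j : Fin n, ∑ k : Fin n,
        (∏ l ∈ insert i S, G (a l) (s j l + (starRingEnd ℂ) (s k l)))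
          * c j * (starRingEnd ℂ) (c k)
        = ∑ j : Fin n, ∑ k : Fin n, ∫ x in Ioi 1, Kt j k x := by
      refine Finset.sum_congr rfl fun j _ => Finset.sum_congr rfl fun k _ => ?_
      rw [Finset.prod_insert hiS,
        ← F_eq_G (ha0 i) (ha1 i) (hwre j k) (hne j k i), hKt]
      simp only
      rw [integral_mul_const]
      ring
    have step2 : ∑ j : Fin n, ∑ k : Fin n, ∫ x in Ioi 1, Kt j k x
        = ∫ x in Ioi 1, ∑ j : Fin n, ∑ k : Fin n, Kt j k x := by
      have h1 : ∀ j : Fin n, ∑ k : Fin n, ∫ x in Ioi 1, Kt j k x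
          = ∫ x in Ioi 1, ∑ k : Fin n, Kt j k x :=
        fun j => (integral_finset_sum Finset.univ (fun k _ => hint j k)).symm
      simp_rw [h1]
      exact (integral_finset_sum Finset.univ
        (fun j _ => integrable_finset_sum Finset.univ (fun k _ => hint j k))).symm
    -- pointwise identification with a nonnegative function
    set u : Fin n → ℝ → ℂ := fun j x => ((x : ℂ) + a i) ^ (-(s j i)) with hu
    have hpt : ∀ x ∈ Ioi (1:ℝ), ∑ j : Fin n, ∑ k : Fin n, Kt j k x
        = (((Int.fract x * (x + a i)⁻¹ : ℝ)) : ℂ)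
            * ∑ j : Fin n, ∑ k : Fin n,
                P j k * (c j * u j x) * (starRingEnd ℂ) (c k * u k x) := by
      intro x hx
      rw [Finset.mul_sum]
      refine Finset.sum_congr rfl fun j _ => ?_
      rw [Finset.mul_sum]
      refine Finset.sum_congr rfl fun k _ => ?_
      rw [hKt]
      simp only
      rw [K_factor (ha0 i) (s j i) (s k i) (mem_Ioi.mp hx), hu]
      simp only [map_mul]
      ring
    have hnonneg : ∀ x ∈ Ioi (1:ℝ), 0 ≤ ∑ j : Fin n, ∑ k : Fin n, Kt j k x := by
      intro x hx
      rw [hpt x hx]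
      apply mul_nonneg
      · have : (0:ℝ) ≤ Int.fract x * (x + a i)⁻¹ := by
          apply mul_nonneg (Int.fract_nonneg x)
          have : (0:ℝ) < x + a i := by
            have := mem_Ioi.mp hx; have := ha0 i; linarith
          positivity
        exact_mod_cast this
      · exact IH (fun j => c j * u j x)
    rw [step1, step2]
    -- integral of a pointwise-nonnegative function is nonnegative
    set Q : ℝ → ℂ := fun x => ∑ j : Fin n, ∑ k : Fin n, Kt j k x with hQ
    have hQcoe : ∀ x ∈ Ioi (1:ℝ), Q x = (((Q x).re : ℝ) : ℂ) := by
      intro x hx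
      have h := hnonneg x hx
      have him := (Complex.le_def.mp h).2
      have him0 : (Q x).im = 0 := by rw [hQ]; simpa using him.symm
      exact (Complex.ext (by simp) (by simp [him0])).symm
    have : ∫ x in Ioi 1, Q x = ((∫ x in Ioi 1, (Q x).re : ℝ) : ℂ) := by
      have hcoe : ∫ x in Ioi (1:ℝ), (((Q x).re : ℝ) : ℂ)
          = ((∫ x in Ioi 1, (Q x).re : ℝ) : ℂ) := integral_ofReal
      rw [← hcoe]
      exact setIntegral_congr_fun measurableSet_Ioi hQcoe
    rw [this]
    have hre : 0 ≤ ∫ x in Ioi 1, (Q x).re := by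
      apply setIntegral_nonneg measurableSet_Ioi
      intro x hx
      have h := hnonneg x hx
      have h1 := (Complex.le_def.mp h).1
      rw [Complex.zero_re] at h1
      exact h1
    exact_mod_cast hre

end HZaux

end
end HZauxSection

/-- For real `0 < a_ℓ ≤ 1` and `s_{j,ℓ} ∈ ℂ` with `Re(s_{j,ℓ}) > 0` and
`w_{jk,ℓ} := s_{j,ℓ} + conj s_{k,ℓ} ≠ 1`, the matrix with `(j,k)` entry
`∏_ℓ ((a_ℓ^{-w} + (1+a_ℓ)^{-w} - ζ(w, a_ℓ))/w + (1+a_ℓ)^{1-w}/(w(w-1)))` (with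
`w = w_{jk,ℓ}`) is positive semidefinite, where `ζ(s, a)` is the Hurwitz zeta function. -/
theorem hurwitzZeta_matrix_posSemidef (m n : ℕ) (a : Fin m → ℝ)
    (ha0 : ∀ l, 0 < a l) (ha1 : ∀ l, a l ≤ 1)
    (s : Fin n → Fin m → ℂ) (hs : ∀ j l, 0 < (s j l).re)
    (hne : ∀ j k l, s j l + (starRingEnd ℂ) (s k l) ≠ 1) :
    ∀ c : Fin n → ℂ,
      0 ≤ ∑ j : Fin n, ∑ k : Fin n,
        (∏ l : Fin m,
            (((a l : ℂ) ^ (-(s j l + (starRingEnd ℂ) (s k l)))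
                + (1 + (a l : ℂ)) ^ (-(s j l + (starRingEnd ℂ) (s k l)))
                - HurwitzZeta.hurwitzZeta (↑(a l) : UnitAddCircle)
                    (s j l + (starRingEnd ℂ) (s k l)))
                / (s j l + (starRingEnd ℂ) (s k l))
              + (1 + (a l : ℂ)) ^ (1 - (s j l + (starRingEnd ℂ) (s k l)))
                / ((s j l + (starRingEnd ℂ) (s k l))
                    * (s j l + (starRingEnd ℂ) (s k l) - 1))))
          * c j * (starRingEnd ℂ) (c k) := by
  intro c
  have h := HZaux.key a ha0 ha1 s hs hne Finset.univ c
  simpa only [HZaux.G] using h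
end

section
/- Let m, n ∈ ℕ, let a₁, …, a_m be real numbers with 0 < a_ℓ ≤ 1, and let s_{j,ℓ} ∈ ℂ with Re(s_{j,ℓ}) > 0 for all 1 ≤ j ≤ n, 1 ≤ ℓ ≤ m; assume w_{jk,ℓ} := s_{j,ℓ} + conj(s_{k,ℓ}) ≠ 1 for all j, k, ℓ. Then the n×n complex matrix whose (j,k) entry is ∏_{ℓ=1}^{m} Γ(w_{jk,ℓ}) ( ζ(w_{jk,ℓ}, (a_ℓ+1)/4) − ζ(w_{jk,ℓ}, (a_ℓ+3)/4) ) is positive semidefinite, where Γ is the Gamma function and ζ(s, a) is the Hurwitz zeta function. -/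
open Complex ComplexOrder
open Filter Topology Asymptotics Set MeasureTheory

noncomputable def psiAux (a t : ℝ) : ℝ :=
  Real.exp (-(1 + a) * t / 4) / (1 + Real.exp (-t / 2))

lemma psiAux_pos (a t : ℝ) : 0 < psiAux a t := by
  unfold psiAux
  positivity

lemma psiAux_le_one {a t : ℝ} (ha : 0 ≤ a) (ht : 0 ≤ t) : psiAux a t ≤ 1 := by
  unfold psiAux
  rw [div_le_one (by positivity)]
  have h1 : Real.exp (-(1 + a) * t / 4) ≤ 1 :=
    Real.exp_le_one_iff.mpr (by nlinarith)
  nlinarith [Real.exp_pos (-t / 2)]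

lemma psiAux_le_exp {a t : ℝ} (ha : 0 ≤ a) (ht : 0 ≤ t) :
    psiAux a t ≤ Real.exp (-(1 / 4) * t) := by
  unfold psiAux
  have h2 : Real.exp (-(1 + a) * t / 4) ≤ Real.exp (-(1 / 4) * t) :=
    Real.exp_le_exp.mpr (by nlinarith)
  refine le_trans (div_le_self (Real.exp_pos _).le ?_) h2
  nlinarith [Real.exp_pos (-t / 2)]

lemma psiAux_continuous (a : ℝ) : Continuous fun t : ℝ => ((psiAux a t : ℝ) : ℂ) := by
  refine Complex.continuous_ofReal.comp ?_
  unfold psiAux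
  refine Continuous.div (by fun_prop) (by fun_prop) (fun t => ?_)
  positivity

lemma psiAux_locInt (a : ℝ) :
    LocallyIntegrableOn (fun t : ℝ => ((psiAux a t : ℝ) : ℂ)) (Ioi 0) :=
  ((psiAux_continuous a).locallyIntegrable).locallyIntegrableOn _

lemma psiAux_isBigO_top {a : ℝ} (ha : 0 ≤ a) :
    (fun t : ℝ => ((psiAux a t : ℝ) : ℂ)) =O[atTop] fun t => Real.exp (-(1 / 4) * t) := by
  rw [Asymptotics.isBigO_iff]
  refine ⟨1, ?_⟩
  filter_upwards [eventually_ge_atTop (0 : ℝ)] with t ht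
  rw [Complex.norm_real, Real.norm_eq_abs, Real.norm_eq_abs,
    abs_of_pos (psiAux_pos a t), abs_of_pos (Real.exp_pos _), one_mul]
  exact psiAux_le_exp ha ht

lemma psiAux_isBigO_zero {a : ℝ} (ha : 0 ≤ a) :
    (fun t : ℝ => ((psiAux a t : ℝ) : ℂ)) =O[𝓝[>] (0:ℝ)] (· ^ (-(0:ℝ))) := by
  rw [Asymptotics.isBigO_iff]
  refine ⟨1, ?_⟩
  filter_upwards [self_mem_nhdsWithin] with t (ht : (0:ℝ) < t)
  rw [Complex.norm_real, Real.norm_eq_abs, abs_of_pos (psiAux_pos a t), neg_zero,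
    Real.rpow_zero, norm_one, one_mul]
  exact psiAux_le_one ha ht.le

lemma psiAux_mellin_conv {a : ℝ} (ha : 0 ≤ a) {w : ℂ} (hw : 0 < w.re) :
    MellinConvergent (fun t : ℝ => ((psiAux a t : ℝ) : ℂ)) w :=
  mellinConvergent_of_isBigO_rpow_exp (by norm_num : (0:ℝ) < 1/4) (psiAux_locInt a)
    (by simpa using psiAux_isBigO_top ha) (psiAux_isBigO_zero ha) hw

lemma psiAux_mellin_diff {a : ℝ} (ha : 0 ≤ a) {w : ℂ} (hw : 0 < w.re) :
    DifferentiableAt ℂ (mellin (fun t : ℝ => ((psiAux a t : ℝ) : ℂ))) w :=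
  mellin_differentiableAt_of_isBigO_rpow_exp (by norm_num : (0:ℝ) < 1/4) (psiAux_locInt a)
    (by simpa using psiAux_isBigO_top ha) (psiAux_isBigO_zero ha) hw

set_option maxHeartbeats 1000000 in
lemma mellin_eq_of_one_lt_re {a : ℝ} (ha0 : 0 < a) (ha1 : a ≤ 1) {w : ℂ} (hw : 1 < w.re) :
    Complex.Gamma w *
        (HurwitzZeta.hurwitzZeta (↑((a + 1) / 4) : UnitAddCircle) w
          - HurwitzZeta.hurwitzZeta (↑((a + 3) / 4) : UnitAddCircle) w)
      = mellin (fun t : ℝ => ((psiAux a t : ℝ) : ℂ)) w := by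
  have hw0 : 0 < w.re := lt_trans one_pos hw
  -- the Mellin side
  have key := hasSum_mellin (ι := ℕ) (a := fun k => ((-1 : ℂ)) ^ k)
      (p := fun k => (2 * k + 1 + a) / 4) (F := fun t : ℝ => ((psiAux a t : ℝ) : ℂ)) (s := w)
      (fun k => Or.inr (by positivity)) hw0 ?_ ?_
  · -- the zeta side
    have h1 : HasSum (fun n : ℕ => 1 / ((n : ℂ) + ((a + 1) / 4 : ℝ)) ^ w)
        (HurwitzZeta.hurwitzZeta (↑((a + 1) / 4) : UnitAddCircle) w) :=
      HurwitzZeta.hasSum_hurwitzZeta_of_one_lt_re ⟨by linarith, by linarith⟩ hw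
    have h3 : HasSum (fun n : ℕ => 1 / ((n : ℂ) + ((a + 3) / 4 : ℝ)) ^ w)
        (HurwitzZeta.hurwitzZeta (↑((a + 3) / 4) : UnitAddCircle) w) :=
      HurwitzZeta.hasSum_hurwitzZeta_of_one_lt_re ⟨by linarith, by linarith⟩ hw
    have he : HasSum
        (fun n : ℕ => Complex.Gamma w * (-1 : ℂ) ^ (2 * n)
          / (((2 * (2 * n : ℕ) + 1 + a) / 4 : ℝ) : ℂ) ^ w)
        (Complex.Gamma w * HurwitzZeta.hurwitzZeta (↑((a + 1) / 4) : UnitAddCircle) w) := by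
      have hfun : (fun n : ℕ => Complex.Gamma w * (-1 : ℂ) ^ (2 * n)
          / (((2 * (2 * n : ℕ) + 1 + a) / 4 : ℝ) : ℂ) ^ w)
          = fun n : ℕ => Complex.Gamma w * (1 / ((n : ℂ) + ((a + 1) / 4 : ℝ)) ^ w) := by
        funext n
        have hc : (((2 * (2 * n : ℕ) + 1 + a) / 4 : ℝ) : ℂ) = (n : ℂ) + ((a + 1) / 4 : ℝ) := by
          push_cast; ring
        rw [hc, pow_mul, neg_one_sq, one_pow]; ring
      rw [hfun]
      exact h1.mul_left (Complex.Gamma w)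
    have ho : HasSum
        (fun n : ℕ => Complex.Gamma w * (-1 : ℂ) ^ (2 * n + 1)
          / (((2 * (2 * n + 1 : ℕ) + 1 + a) / 4 : ℝ) : ℂ) ^ w)
        (-(Complex.Gamma w * HurwitzZeta.hurwitzZeta (↑((a + 3) / 4) : UnitAddCircle) w)) := by
      have hfun : (fun n : ℕ => Complex.Gamma w * (-1 : ℂ) ^ (2 * n + 1)
          / (((2 * (2 * n + 1 : ℕ) + 1 + a) / 4 : ℝ) : ℂ) ^ w)
          = fun n : ℕ => -(Complex.Gamma w * (1 / ((n : ℂ) + ((a + 3) / 4 : ℝ)) ^ w)) := by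
        funext n
        have hc : (((2 * (2 * n + 1 : ℕ) + 1 + a) / 4 : ℝ) : ℂ) = (n : ℂ) + ((a + 3) / 4 : ℝ) := by
          push_cast; ring
        rw [hc, pow_succ, pow_mul, neg_one_sq, one_pow]; ring
      rw [hfun]
      exact (h3.mul_left (Complex.Gamma w)).neg
    have hEO := HasSum.even_add_odd
      (f := fun k : ℕ => Complex.Gamma w * (-1 : ℂ) ^ k
        / (((2 * (k : ℕ) + 1 + a) / 4 : ℝ) : ℂ) ^ w) he ho
    have := key.unique hEO
    rw [this]; ring
  · -- pointwise geometric sum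
    intro t ht
    rw [mem_Ioi] at ht
    have hr : ‖(-(Real.exp (-t / 2) : ℝ) : ℂ)‖ < 1 := by
      rw [norm_neg, Complex.norm_real, Real.norm_eq_abs, abs_of_pos (Real.exp_pos _)]
      exact Real.exp_lt_one_iff.mpr (by linarith)
    have hg := (hasSum_geometric_of_norm_lt_one hr).mul_left
      ((Real.exp (-(1 + a) * t / 4) : ℝ) : ℂ)
    have hval : ((Real.exp (-(1 + a) * t / 4) : ℝ) : ℂ)
        * (1 - (-(Real.exp (-t / 2) : ℝ) : ℂ))⁻¹ = ((psiAux a t : ℝ) : ℂ) := by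
      unfold psiAux
      push_cast
      rw [sub_neg_eq_add]; ring
    rw [hval] at hg
    have hfun : (fun k : ℕ => ((Real.exp (-(1 + a) * t / 4) : ℝ) : ℂ)
        * (-(Real.exp (-t / 2) : ℝ) : ℂ) ^ k)
        = fun k : ℕ => (-1 : ℂ) ^ k * ((Real.exp (-((2 * k + 1 + a) / 4) * t) : ℝ) : ℂ) := by
      funext k
      have hexp : Real.exp (-(1 + a) * t / 4) * Real.exp (-t / 2) ^ k
          = Real.exp (-((2 * k + 1 + a) / 4) * t) := by
        rw [← Real.exp_nat_mul, ← Real.exp_add]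
        congr 1
        ring
      calc ((Real.exp (-(1 + a) * t / 4) : ℝ) : ℂ) * (-(Real.exp (-t / 2) : ℝ) : ℂ) ^ k
          = (-1 : ℂ) ^ k * ((Real.exp (-(1 + a) * t / 4) * Real.exp (-t / 2) ^ k : ℝ) : ℂ) := by
            push_cast
            rw [neg_pow]
            ring
        _ = (-1 : ℂ) ^ k * ((Real.exp (-((2 * k + 1 + a) / 4) * t) : ℝ) : ℂ) := by rw [hexp]
    rw [hfun] at hg
    exact hg
  · -- summability
    have hσ : 1 < w.re := hw
    have h0 : Summable (fun n : ℕ => 1 / (n : ℝ) ^ w.re) :=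
      Real.summable_one_div_nat_rpow.mpr hσ
    have h1 : Summable (fun k : ℕ => 1 / ((k : ℝ) + 1) ^ w.re) := by
      have := (summable_nat_add_iff (f := fun n : ℕ => 1 / (n : ℝ) ^ w.re) 1).mpr h0
      simpa [Nat.cast_add] using this
    refine Summable.of_nonneg_of_le (fun k => by positivity) (fun k => ?_)
      (h1.mul_left ((4 : ℝ) ^ w.re))
    have hp : (0 : ℝ) < (2 * k + 1 + a) / 4 := by positivity
    have hk1 : ((k : ℝ) + 1) / 4 ≤ (2 * k + 1 + a) / 4 := by
      apply div_le_div_of_nonneg_right ?_ (by norm_num)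
      · linarith [Nat.cast_nonneg (α := ℝ) k]
    have hk0 : (0 : ℝ) < ((k : ℝ) + 1) / 4 := by positivity
    have hle : (((k : ℝ) + 1) / 4) ^ w.re ≤ ((2 * k + 1 + a) / 4) ^ w.re :=
      Real.rpow_le_rpow hk0.le hk1 (by linarith)
    have hnorm : ‖(-1 : ℂ) ^ k‖ = 1 := by
      rw [norm_pow, norm_neg, norm_one, one_pow]
    rw [hnorm]
    calc 1 / ((2 * k + 1 + a) / 4) ^ w.re ≤ 1 / (((k : ℝ) + 1) / 4) ^ w.re := by
          apply one_div_le_one_div_of_le (Real.rpow_pos_of_pos hk0 _) hle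
      _ = (4 : ℝ) ^ w.re * (1 / ((k : ℝ) + 1) ^ w.re) := by
          rw [Real.div_rpow (by positivity) (by norm_num), one_div_div, div_eq_mul_one_div]

lemma mellin_eq_of_pos_re {a : ℝ} (ha0 : 0 < a) (ha1 : a ≤ 1) {w : ℂ} (hw : 0 < w.re) :
    Complex.Gamma w *
        (HurwitzZeta.hurwitzZeta (↑((a + 1) / 4) : UnitAddCircle) w
          - HurwitzZeta.hurwitzZeta (↑((a + 3) / 4) : UnitAddCircle) w)
      = mellin (fun t : ℝ => ((psiAux a t : ℝ) : ℂ)) w := by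
  set L : ℂ → ℂ := fun z => Complex.Gamma z *
      (HurwitzZeta.hurwitzZeta (↑((a + 1) / 4) : UnitAddCircle) z
        - HurwitzZeta.hurwitzZeta (↑((a + 3) / 4) : UnitAddCircle) z) with hLdef
  set R : ℂ → ℂ := mellin (fun t : ℝ => ((psiAux a t : ℝ) : ℂ)) with hRdef
  have hUo : IsOpen {z : ℂ | 0 < z.re} := isOpen_lt continuous_const Complex.continuous_re
  have hL : AnalyticOnNhd ℂ L {z : ℂ | 0 < z.re} := by
    refine DifferentiableOn.analyticOnNhd (fun z hz => ?_) hUo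
    have hz' : 0 < z.re := hz
    have hG : DifferentiableAt ℂ Complex.Gamma z := by
      refine Complex.differentiableAt_Gamma z (fun k => ?_)
      intro h
      rw [h] at hz'
      simp only [neg_re, natCast_re] at hz'
      have : (0 : ℝ) ≤ (k : ℝ) := Nat.cast_nonneg k
      linarith
    exact (hG.mul ((HurwitzZeta.differentiable_hurwitzZeta_sub_hurwitzZeta
      (↑((a + 1) / 4) : UnitAddCircle) (↑((a + 3) / 4) : UnitAddCircle)) z)).differentiableWithinAt
  have hR : AnalyticOnNhd ℂ R {z : ℂ | 0 < z.re} :=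
    DifferentiableOn.analyticOnNhd
      (fun z hz => (psiAux_mellin_diff ha0.le hz).differentiableWithinAt) hUo
  have hpre : IsPreconnected {z : ℂ | 0 < z.re} := (convex_halfSpace_re_gt 0).isPreconnected
  have h2 : (2 : ℂ) ∈ {z : ℂ | 0 < z.re} := by norm_num [Set.mem_setOf_eq]
  have hev : L =ᶠ[𝓝 (2 : ℂ)] R := by
    have ho : IsOpen {z : ℂ | 1 < z.re} := isOpen_lt continuous_const Complex.continuous_re
    filter_upwards [ho.mem_nhds (by norm_num [Set.mem_setOf_eq])] with z hz
    exact mellin_eq_of_one_lt_re ha0 ha1 hz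
  exact hL.eqOn_of_preconnected_of_eventuallyEq hR hpre h2 hev hw


/-- For real `0 < a_ℓ ≤ 1` and `s_{j,ℓ} ∈ ℂ` with `Re(s_{j,ℓ}) > 0` and
`w_{jk,ℓ} := s_{j,ℓ} + conj s_{k,ℓ} ≠ 1`, the matrix with `(j,k)` entry
`∏_ℓ Γ(w_{jk,ℓ}) (ζ(w_{jk,ℓ}, (a_ℓ+1)/4) - ζ(w_{jk,ℓ}, (a_ℓ+3)/4))` is positive
semidefinite, where `ζ(s, a)` is the Hurwitz zeta function. -/
theorem gamma_hurwitzZeta_diff_matrix_posSemidef (m n : ℕ) (a : Fin m → ℝ)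
    (ha0 : ∀ l, 0 < a l) (ha1 : ∀ l, a l ≤ 1)
    (s : Fin n → Fin m → ℂ) (hs : ∀ j l, 0 < (s j l).re)
    (hne : ∀ j k l, s j l + (starRingEnd ℂ) (s k l) ≠ 1) :
    ∀ c : Fin n → ℂ,
      0 ≤ ∑ j : Fin n, ∑ k : Fin n,
        (∏ l : Fin m,
            Complex.Gamma (s j l + (starRingEnd ℂ) (s k l))
              * (HurwitzZeta.hurwitzZeta (↑((a l + 1) / 4) : UnitAddCircle)
                    (s j l + (starRingEnd ℂ) (s k l))
                - HurwitzZeta.hurwitzZeta (↑((a l + 3) / 4) : UnitAddCircle)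
                    (s j l + (starRingEnd ℂ) (s k l))))
          * c j * (starRingEnd ℂ) (c k) := by
  intro c
  classical
  set W : Fin n → Fin n → Fin m → ℂ :=
    fun j k l => s j l + (starRingEnd ℂ) (s k l) with hWdef
  have hWre : ∀ j k l, 0 < (W j k l).re := by
    intro j k l
    simp only [hWdef, add_re, Complex.conj_re]
    exact add_pos (hs j l) (hs k l)
  set u : Fin n → Fin m → ℝ → ℂ :=
    (fun j l => Set.indicator (Ioi 0) (fun t : ℝ => (t : ℂ) ^ (s j l))) with hudef
  set Rho : Fin m → ℝ → ℝ :=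
    (fun l => Set.indicator (Ioi 0) (fun t : ℝ => psiAux (a l) t / t)) with hRhodef
  set K : Fin n → Fin n → Fin m → ℝ → ℂ := (fun j k l =>
    Set.indicator (Ioi 0)
      (fun t : ℝ => (t : ℂ) ^ (W j k l - 1) * ((psiAux (a l) t : ℝ) : ℂ))) with hKdef
  have hRho_nonneg : ∀ l t, 0 ≤ Rho l t := fun l t =>
    Set.indicator_nonneg (fun x hx => div_nonneg (psiAux_pos _ _).le (le_of_lt hx)) t
  -- factorization of the kernel
  have hKfac : ∀ j k l t,
      K j k l t = u j l t * (starRingEnd ℂ) (u k l t) * ((Rho l t : ℝ) : ℂ) := by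
    intro j k l t
    by_cases ht : t ∈ Ioi (0 : ℝ)
    · have ht0 : (0 : ℝ) < t := ht
      have htne : (t : ℂ) ≠ 0 := Complex.ofReal_ne_zero.mpr ht0.ne'
      simp only [hKdef, hudef, hRhodef, Set.indicator_of_mem ht]
      have hconj : (t : ℂ) ^ ((starRingEnd ℂ) (s k l))
          = (starRingEnd ℂ) ((t : ℂ) ^ (s k l)) := by
        have harg : (t : ℂ).arg ≠ Real.pi := by
          rw [Complex.arg_ofReal_of_nonneg ht0.le]
          exact Real.pi_ne_zero.symm
        rw [Complex.cpow_conj _ _ harg, Complex.conj_ofReal]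
      have hsplit : (t : ℂ) ^ (W j k l - 1)
          = (t : ℂ) ^ (s j l) * ((t : ℂ) ^ ((starRingEnd ℂ) (s k l)) * (t : ℂ)⁻¹) := by
        rw [show W j k l - 1 = s j l + ((starRingEnd ℂ) (s k l) + (-1)) by
          simp only [hWdef]; ring]
        rw [Complex.cpow_add _ _ htne, Complex.cpow_add _ _ htne, Complex.cpow_neg_one]
      rw [hsplit, hconj, Complex.ofReal_div]
      ring
    · simp only [hKdef, hudef, hRhodef, Set.indicator_of_notMem ht, map_zero,
        Complex.ofReal_zero, zero_mul, mul_zero]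
  -- each kernel function is integrable
  have hKint : ∀ j k l, Integrable (K j k l) := by
    intro j k l
    have h := psiAux_mellin_conv (ha0 l).le (hWre j k l)
    have h' : IntegrableOn
        (fun t : ℝ => (t : ℂ) ^ (W j k l - 1) * ((psiAux (a l) t : ℝ) : ℂ)) (Ioi 0) := by
      simpa only [MellinConvergent, smul_eq_mul] using h
    exact h'.integrable_indicator measurableSet_Ioi
  -- the matrix entries as integrals over (Fin m → ℝ)
  have hent : ∀ j k,
      (∏ l : Fin m,
        Complex.Gamma (s j l + (starRingEnd ℂ) (s k l))
          * (HurwitzZeta.hurwitzZeta (↑((a l + 1) / 4) : UnitAddCircle)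
                (s j l + (starRingEnd ℂ) (s k l))
            - HurwitzZeta.hurwitzZeta (↑((a l + 3) / 4) : UnitAddCircle)
                (s j l + (starRingEnd ℂ) (s k l))))
        = ∫ x : Fin m → ℝ, ∏ l : Fin m, K j k l (x l) := by
    intro j k
    rw [MeasureTheory.integral_fintype_prod_volume_eq_prod (ι := Fin m) (f := fun l => K j k l)]
    refine Finset.prod_congr rfl fun l _ => ?_
    have h1 := mellin_eq_of_pos_re (ha0 l) (ha1 l) (hWre j k l)
    calc Complex.Gamma (s j l + (starRingEnd ℂ) (s k l))
          * (HurwitzZeta.hurwitzZeta (↑((a l + 1) / 4) : UnitAddCircle)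
                (s j l + (starRingEnd ℂ) (s k l))
            - HurwitzZeta.hurwitzZeta (↑((a l + 3) / 4) : UnitAddCircle)
                (s j l + (starRingEnd ℂ) (s k l)))
        = mellin (fun t : ℝ => ((psiAux (a l) t : ℝ) : ℂ)) (W j k l) := h1
      _ = ∫ t : ℝ in Ioi 0,
            (t : ℂ) ^ (W j k l - 1) * ((psiAux (a l) t : ℝ) : ℂ) := by
          rw [mellin]
          simp only [smul_eq_mul]
      _ = ∫ t : ℝ, K j k l t := by
          rw [hKdef, ← integral_indicator measurableSet_Ioi]
  have hPint : ∀ j k, Integrable (fun x : Fin m → ℝ => ∏ l : Fin m, K j k l (x l)) :=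
    fun j k => Integrable.fintype_prod (fun l => hKint j k l)
  -- the Gram functions
  set T : Fin n → (Fin m → ℝ) → ℂ := (fun j x => ∏ l : Fin m, u j l (x l)) with hTdef
  set R : (Fin m → ℝ) → ℝ := (fun x => ∏ l : Fin m, Rho l (x l)) with hRdef
  have hR_nonneg : ∀ x, 0 ≤ R x := fun x =>
    Finset.prod_nonneg fun l _ => hRho_nonneg l (x l)
  -- pointwise identity
  have hpoint : ∀ x : Fin m → ℝ,
      (∑ j : Fin n, ∑ k : Fin n,
        (∏ l : Fin m, K j k l (x l)) * c j * (starRingEnd ℂ) (c k))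
      = ((Complex.normSq (∑ j : Fin n, c j * T j x) * R x : ℝ) : ℂ) := by
    intro x
    have h1 : ∀ j k, (∏ l : Fin m, K j k l (x l))
        = T j x * (starRingEnd ℂ) (T k x) * ((R x : ℝ) : ℂ) := by
      intro j k
      simp only [hTdef, hRdef]
      rw [map_prod, Complex.ofReal_prod, ← Finset.prod_mul_distrib, ← Finset.prod_mul_distrib]
      exact Finset.prod_congr rfl fun l _ => hKfac j k l (x l)
    calc (∑ j : Fin n, ∑ k : Fin n,
          (∏ l : Fin m, K j k l (x l)) * c j * (starRingEnd ℂ) (c k))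
        = (∑ j : Fin n, c j * T j x)
            * (starRingEnd ℂ) (∑ k : Fin n, c k * T k x) * ((R x : ℝ) : ℂ) := by
          rw [map_sum, Finset.sum_mul_sum, Finset.sum_mul]
          refine Finset.sum_congr rfl fun j _ => ?_
          rw [Finset.sum_mul]
          refine Finset.sum_congr rfl fun k _ => ?_
          rw [h1 j k, map_mul]
          ring
      _ = ((Complex.normSq (∑ j : Fin n, c j * T j x) * R x : ℝ) : ℂ) := by
          rw [Complex.ofReal_mul, ← Complex.mul_conj]
  -- put everything together
  calc (0 : ℂ)
      ≤ ((∫ x : Fin m → ℝ,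
          Complex.normSq (∑ j : Fin n, c j * T j x) * R x : ℝ) : ℂ) := by
        rw [Complex.zero_le_real]
        exact integral_nonneg fun x => mul_nonneg (Complex.normSq_nonneg _) (hR_nonneg x)
    _ = ∫ x : Fin m → ℝ,
          ((Complex.normSq (∑ j : Fin n, c j * T j x) * R x : ℝ) : ℂ) :=
        (integral_ofReal).symm
    _ = ∫ x : Fin m → ℝ, ∑ j : Fin n, ∑ k : Fin n,
          (∏ l : Fin m, K j k l (x l)) * c j * (starRingEnd ℂ) (c k) := by
        exact integral_congr_ae (Filter.Eventually.of_forall fun x => (hpoint x).symm)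
    _ = ∑ j : Fin n, ∑ k : Fin n, ∫ x : Fin m → ℝ,
          (∏ l : Fin m, K j k l (x l)) * c j * (starRingEnd ℂ) (c k) := by
        rw [integral_finset_sum]
        · exact Finset.sum_congr rfl fun j _ => integral_finset_sum _
            (fun k _ => ((hPint j k).mul_const (c j)).mul_const ((starRingEnd ℂ) (c k)))
        · exact fun j _ => integrable_finset_sum _
            (fun k _ => ((hPint j k).mul_const (c j)).mul_const ((starRingEnd ℂ) (c k)))
    _ = ∑ j : Fin n, ∑ k : Fin n,
          (∏ l : Fin m,
            Complex.Gamma (s j l + (starRingEnd ℂ) (s k l))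
              * (HurwitzZeta.hurwitzZeta (↑((a l + 1) / 4) : UnitAddCircle)
                    (s j l + (starRingEnd ℂ) (s k l))
                - HurwitzZeta.hurwitzZeta (↑((a l + 3) / 4) : UnitAddCircle)
                    (s j l + (starRingEnd ℂ) (s k l))))
          * c j * (starRingEnd ℂ) (c k) := by
        refine Finset.sum_congr rfl fun j _ => Finset.sum_congr rfl fun k _ => ?_
        rw [hent j k, integral_mul_const, integral_mul_const]
end

section
/- Let m, n ∈ ℕ, let a₁, …, a_m be positive real numbers, let z₁, …, z_m be real numbers with z_ℓ < 1, and let s_{j,ℓ} ∈ ℂ with Re(s_{j,ℓ}) > 0 for all 1 ≤ j ≤ n, 1 ≤ ℓ ≤ m. Then the n×n complex matrix whose (j,k) entry is ∏_{ℓ=1}^{m} ∫₀^∞ x^{s_{j,ℓ} + conj(s_{k,ℓ}) − 1} e^{−a_ℓ x} / (1 − z_ℓ e^{−x}) dx is positive semidefinite. (Each integral equals Γ(s_{j,ℓ}+conj(s_{k,ℓ})) Φ(z_ℓ, s_{j,ℓ}+conj(s_{k,ℓ}), a_ℓ), where Φ is Lerch's transcendent.) -/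
open Complex ComplexOrder
open MeasureTheory Set

noncomputable def lerchW (a z x : ℝ) : ℝ := Real.exp (-a * x) / (1 - z * Real.exp (-x))

noncomputable def lerchF (a z : ℝ) (t : ℂ) (x : ℝ) : ℂ :=
  (x : ℂ) ^ (t - 1) * Complex.exp (-(a : ℂ) * x) / (1 - (z : ℂ) * Complex.exp (-(x : ℂ)))

noncomputable def lerchG (a z : ℝ) (u : ℂ) (x : ℝ) : ℂ :=
  (x : ℂ) ^ (u - 1/2) * (Real.sqrt (lerchW a z x) : ℂ)

lemma lerch_denom_pos {z : ℝ} (hz : z < 1) {x : ℝ} (hx : 0 < x) :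
    0 < 1 - z * Real.exp (-x) := by
  have h1 : Real.exp (-x) < 1 := Real.exp_lt_one_iff.mpr (by linarith)
  have h2 : 0 < Real.exp (-x) := Real.exp_pos _
  rcases le_or_gt z 0 with h | h
  · nlinarith
  · nlinarith

lemma lerchW_pos {a z : ℝ} (hz : z < 1) {x : ℝ} (hx : 0 < x) : 0 < lerchW a z x :=
  div_pos (Real.exp_pos _) (lerch_denom_pos hz hx)

lemma lerchF_eq (a z : ℝ) (t : ℂ) (x : ℝ) :
    lerchF a z t x = (x : ℂ) ^ (t - 1) * (lerchW a z x : ℂ) := by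
  unfold lerchF lerchW
  rw [mul_div_assoc]
  congr 1
  push_cast
  ring_nf

lemma conj_ofReal_cpow {x : ℝ} (hx : 0 < x) (w : ℂ) :
    (starRingEnd ℂ) ((x : ℂ) ^ w) = (x : ℂ) ^ ((starRingEnd ℂ) w) := by
  have harg : (x : ℂ).arg ≠ Real.pi := by
    rw [Complex.arg_ofReal_of_nonneg hx.le]
    exact fun h => Real.pi_ne_zero h.symm
  rw [Complex.cpow_conj _ _ harg, Complex.conj_ofReal]

lemma lerchG_mul_conj {a z : ℝ} (hz : z < 1) (u v : ℂ) {x : ℝ} (hx : 0 < x) :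
    lerchG a z u x * (starRingEnd ℂ) (lerchG a z v x)
      = lerchF a z (u + (starRingEnd ℂ) v) x := by
  have hx0 : (x : ℂ) ≠ 0 := by exact_mod_cast hx.ne'
  rw [lerchF_eq]
  unfold lerchG
  rw [map_mul, conj_ofReal_cpow hx, Complex.conj_ofReal, map_sub, map_div₀]
  simp only [map_one, map_ofNat]
  have : (x : ℂ) ^ (u - 1/2) * ((Real.sqrt (lerchW a z x) : ℂ))
      * ((x : ℂ) ^ ((starRingEnd ℂ) v - 1/2) * ((Real.sqrt (lerchW a z x) : ℂ)))
      = ((x : ℂ) ^ (u - 1/2) * (x : ℂ) ^ ((starRingEnd ℂ) v - 1/2))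
        * ((Real.sqrt (lerchW a z x) : ℂ) * (Real.sqrt (lerchW a z x) : ℂ)) := by ring
  rw [this, ← Complex.cpow_add _ _ hx0, ← Complex.ofReal_mul,
    Real.mul_self_sqrt (lerchW_pos hz hx).le]
  congr 2
  ring

lemma lerchF_integrable {a z : ℝ} (ha : 0 < a) (hz : z < 1) {t : ℂ} (ht : 0 < t.re) :
    IntegrableOn (lerchF a z t) (Ioi 0) := by
  set C : ℝ := max 1 (1 - z)⁻¹ with hC
  have hdenomC : ∀ x : ℝ, 0 < x → (1 - z * Real.exp (-x))⁻¹ ≤ C := by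
    intro x hx
    have h2 : 0 < Real.exp (-x) := Real.exp_pos _
    have h1 : Real.exp (-x) < 1 := Real.exp_lt_one_iff.mpr (by linarith)
    have hd := lerch_denom_pos hz hx
    rcases le_or_gt z 0 with h | h
    · have : 1 ≤ 1 - z * Real.exp (-x) := by nlinarith
      calc (1 - z * Real.exp (-x))⁻¹ ≤ 1 := by
            rw [inv_le_one_iff₀]; right; exact this
        _ ≤ C := le_max_left _ _
    · have h1z : 0 < 1 - z := by linarith
      have : 1 - z ≤ 1 - z * Real.exp (-x) := by nlinarith
      calc (1 - z * Real.exp (-x))⁻¹ ≤ (1 - z)⁻¹ := by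
            apply inv_anti₀ h1z this
        _ ≤ C := le_max_right _ _
  have hbound : IntegrableOn (fun x : ℝ => C * (x ^ (t.re - 1) * Real.exp (-a * x))) (Ioi 0) := by
    have := integrableOn_rpow_mul_exp_neg_mul_rpow (s := t.re - 1) (p := 1)
      (by linarith) one_pos ha
    simp_rw [Real.rpow_one] at this
    exact this.const_mul C
  have hmeas : AEStronglyMeasurable (lerchF a z t) (volume.restrict (Ioi 0)) := by
    apply ContinuousOn.aestronglyMeasurable _ measurableSet_Ioi
    apply ContinuousOn.div
    · apply ContinuousOn.mul
      · intro x hx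
        exact (continuousAt_ofReal_cpow_const x _ (Or.inr (ne_of_gt hx))).continuousWithinAt
      · exact (Complex.continuous_exp.comp
          ((continuous_const.mul Complex.continuous_ofReal))).continuousOn
    · exact (continuous_const.sub (continuous_const.mul
        (Complex.continuous_exp.comp Complex.continuous_ofReal.neg))).continuousOn
    · intro x hx
      have : (1 : ℂ) - (z : ℂ) * Complex.exp (-(x : ℂ)) = ((1 - z * Real.exp (-x) : ℝ) : ℂ) := by
        push_cast; ring_nf
      rw [this]
      exact_mod_cast (lerch_denom_pos hz hx).ne'
  refine Integrable.mono' hbound hmeas ?_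
  rw [ae_restrict_iff' measurableSet_Ioi]
  filter_upwards with x hx
  have hd := lerch_denom_pos hz hx
  have hxC : (1 : ℂ) - (z : ℂ) * Complex.exp (-(x : ℂ)) = ((1 - z * Real.exp (-x) : ℝ) : ℂ) := by
    push_cast; ring_nf
  unfold lerchF
  rw [norm_div, norm_mul, hxC, Complex.norm_real, Real.norm_of_nonneg hd.le,
    Complex.norm_cpow_eq_rpow_re_of_pos hx]
  have hexp : ‖Complex.exp (-(a : ℂ) * x)‖ = Real.exp (-a * x) := by
    rw [show -(a:ℂ) * x = ((-a * x : ℝ) : ℂ) by push_cast; ring, ← Complex.ofReal_exp,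
      Complex.norm_real, Real.norm_of_nonneg (Real.exp_pos _).le]
  rw [hexp, Complex.sub_re, Complex.one_re]
  rw [div_eq_mul_inv]
  calc x ^ (t.re - 1) * Real.exp (-a * x) * (1 - z * Real.exp (-x))⁻¹
      ≤ x ^ (t.re - 1) * Real.exp (-a * x) * C := by
        apply mul_le_mul_of_nonneg_left (hdenomC x hx)
        exact mul_nonneg (Real.rpow_nonneg (le_of_lt hx) _) (Real.exp_pos _).le
    _ = C * (x ^ (t.re - 1) * Real.exp (-a * x)) := by ring


/-- For real `a_ℓ > 0`, real `z_ℓ < 1`, and `s_{j,ℓ} ∈ ℂ` with `Re(s_{j,ℓ}) > 0`, the matrix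
with `(j,k)` entry
`∏_{ℓ=1}^m ∫₀^∞ x^{s_{j,ℓ} + conj s_{k,ℓ} - 1} e^{-a_ℓ x} / (1 - z_ℓ e^{-x}) dx`
is positive semidefinite.  (Each integral equals
`Γ(s_{j,ℓ} + conj s_{k,ℓ}) Φ(z_ℓ, s_{j,ℓ} + conj s_{k,ℓ}, a_ℓ)`, where `Φ` is Lerch's
transcendent.) -/
theorem lerch_matrix_posSemidef (m n : ℕ) (a z : Fin m → ℝ)
    (ha : ∀ l, 0 < a l) (hz : ∀ l, z l < 1)
    (s : Fin n → Fin m → ℂ) (hs : ∀ j l, 0 < (s j l).re) :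
    ∀ c : Fin n → ℂ,
      0 ≤ ∑ j : Fin n, ∑ k : Fin n,
        (∏ l : Fin m,
            ∫ x : ℝ in Set.Ioi (0 : ℝ),
              (x : ℂ) ^ (s j l + (starRingEnd ℂ) (s k l) - 1)
                * Complex.exp (-(a l : ℂ) * x) / (1 - (z l : ℂ) * Complex.exp (-(x : ℂ))))
          * c j * (starRingEnd ℂ) (c k) := by
  intro c
  classical
  set G : Fin n → Fin m → ℝ → ℂ :=
    fun j l => Set.indicator (Set.Ioi 0) (lerchG (a l) (z l) (s j l)) with hGdef
  have hGconj : ∀ (j k : Fin n) (l : Fin m) (x : ℝ),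
      G j l x * (starRingEnd ℂ) (G k l x)
        = Set.indicator (Set.Ioi 0)
            (lerchF (a l) (z l) (s j l + (starRingEnd ℂ) (s k l))) x := by
    intro j k l x
    by_cases hx : x ∈ Set.Ioi (0 : ℝ)
    · simp only [hGdef, Set.indicator_of_mem hx]
      exact lerchG_mul_conj (hz l) _ _ hx
    · simp [hGdef, Set.indicator_of_notMem hx]
  have hre : ∀ (j k : Fin n) (l : Fin m),
      0 < (s j l + (starRingEnd ℂ) (s k l)).re := by
    intro j k l
    have h1 := hs j l; have h2 := hs k l
    simp only [Complex.add_re, Complex.conj_re]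
    linarith
  have hInt : ∀ (j k : Fin n) (l : Fin m),
      Integrable (fun x : ℝ => G j l x * (starRingEnd ℂ) (G k l x)) := by
    intro j k l
    have h : Integrable (Set.indicator (Set.Ioi 0)
        (lerchF (a l) (z l) (s j l + (starRingEnd ℂ) (s k l)))) := by
      rw [integrable_indicator_iff measurableSet_Ioi]
      exact lerchF_integrable (ha l) (hz l) (hre j k l)
    exact h.congr (Filter.Eventually.of_forall fun x => (hGconj j k l x).symm)
  have hIntP : ∀ (j k : Fin n),
      Integrable (fun x : Fin m → ℝ =>
        ∏ l : Fin m, (G j l (x l) * (starRingEnd ℂ) (G k l (x l)))) :=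
    fun j k => Integrable.fintype_prod (fun l => hInt j k l)
  have hentry : ∀ (j k : Fin n),
      (∏ l : Fin m,
          ∫ x : ℝ in Set.Ioi (0 : ℝ),
            (x : ℂ) ^ (s j l + (starRingEnd ℂ) (s k l) - 1)
              * Complex.exp (-(a l : ℂ) * x) / (1 - (z l : ℂ) * Complex.exp (-(x : ℂ))))
        = ∫ x : Fin m → ℝ,
            ∏ l : Fin m, (G j l (x l) * (starRingEnd ℂ) (G k l (x l))) := by
    intro j k
    rw [MeasureTheory.volume_pi, MeasureTheory.integral_fintype_prod_eq_prod
      (fun l (x : ℝ) => G j l x * (starRingEnd ℂ) (G k l x))]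
    apply Finset.prod_congr rfl
    intro l _
    have h1 : (∫ x : ℝ, G j l x * (starRingEnd ℂ) (G k l x))
        = ∫ x : ℝ, Set.indicator (Set.Ioi 0)
            (lerchF (a l) (z l) (s j l + (starRingEnd ℂ) (s k l))) x := by
      congr 1; funext x; exact hGconj j k l x
    rw [h1, MeasureTheory.integral_indicator measurableSet_Ioi]
    rfl
  calc (0 : ℂ)
      ≤ ((∫ x : Fin m → ℝ,
          Complex.normSq (∑ j : Fin n, (∏ l : Fin m, G j l (x l)) * c j)) : ℝ) := by
        rw [Complex.zero_le_real]
        exact integral_nonneg fun x => Complex.normSq_nonneg _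
    _ = ∫ x : Fin m → ℝ,
          ((Complex.normSq (∑ j : Fin n, (∏ l : Fin m, G j l (x l)) * c j) : ℝ) : ℂ) :=
        (integral_ofReal).symm
    _ = ∫ x : Fin m → ℝ, ∑ j : Fin n, ∑ k : Fin n,
          (∏ l : Fin m, (G j l (x l) * (starRingEnd ℂ) (G k l (x l)))) * c j
            * (starRingEnd ℂ) (c k) := by
        congr 1; funext x
        rw [← Complex.mul_conj, map_sum, Finset.sum_mul_sum]
        apply Finset.sum_congr rfl; intro j _
        apply Finset.sum_congr rfl; intro k _
        rw [Finset.prod_mul_distrib, map_mul, map_prod]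
        ring
    _ = ∑ j : Fin n, ∑ k : Fin n,
          (∫ x : Fin m → ℝ,
            ∏ l : Fin m, (G j l (x l) * (starRingEnd ℂ) (G k l (x l)))) * c j
            * (starRingEnd ℂ) (c k) := by
        rw [MeasureTheory.integral_finset_sum]
        · apply Finset.sum_congr rfl; intro j _
          rw [MeasureTheory.integral_finset_sum]
          · apply Finset.sum_congr rfl; intro k _
            simp_rw [mul_assoc]
            rw [MeasureTheory.integral_mul_const]
          · intro k _
            exact ((hIntP j k).mul_const _).mul_const _
        · intro j _
          apply integrable_finset_sum
          intro k _
          exact ((hIntP j k).mul_const _).mul_const _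
    _ = ∑ j : Fin n, ∑ k : Fin n,
        (∏ l : Fin m,
            ∫ x : ℝ in Set.Ioi (0 : ℝ),
              (x : ℂ) ^ (s j l + (starRingEnd ℂ) (s k l) - 1)
                * Complex.exp (-(a l : ℂ) * x) / (1 - (z l : ℂ) * Complex.exp (-(x : ℂ))))
          * c j * (starRingEnd ℂ) (c k) := by
        apply Finset.sum_congr rfl; intro j _
        apply Finset.sum_congr rfl; intro k _
        rw [hentry j k]
end
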